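/- Arc-length stretching equals gradient ratio (Lemma 4.2): Under the transport setup, fix times t₀ ≤ t and let γ : I → ℝ² be a C¹ curve (a level-set segment of θ(·, t₀) parametrized by arc length) with γ′(β) = ξ(γ(β), t₀) and ∇^⊥θ(γ(β), t₀) ≠ 0 for all β ∈ I. Then for every β ∈ I, ‖∂_β [X(γ(β), t₀, t)]‖ = ‖∇^⊥θ(X(γ(β), t₀, t), t)‖ / ‖∇^⊥θ(γ(β), t₀)‖; that is, the local arc-length stretching factor ∂s/∂β of the transported level set equals the ratio of the magnitudes of ∇^⊥θ at the transported point and at the initial point. -/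

import Mathlib

noncomputable section
open Real

/-- The plane, with its Euclidean structure. -/
abbrev E2 := EuclideanSpace ℝ (Fin 2)

/-- `v^⊥ = (-v₂, v₁)`. -/
def perp (v : E2) : E2 := (WithLp.equiv 2 (Fin 2 → ℝ)).symm ![-(v 1), v 0]

/-- The perpendicular spatial gradient `∇^⊥θ(x,t) = (-∂θ/∂x₂, ∂θ/∂x₁)`. -/
def perpGrad (θ : E2 → ℝ → ℝ) (t : ℝ) (x : E2) : E2 :=
  perp (gradient (fun y => θ y t) x)

/-- The unit direction field `ξ = ∇^⊥θ / ‖∇^⊥θ‖` (where `∇^⊥θ ≠ 0`). -/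
def xi (θ : E2 → ℝ → ℝ) (t : ℝ) (x : E2) : E2 :=
  ‖perpGrad θ t x‖⁻¹ • perpGrad θ t x

open scoped RealInnerProductSpace

lemma fderiv_eq_inner_gradient (f : E2 → ℝ) (x v : E2) :
    fderiv ℝ f x v = ⟪gradient f x, v⟫ := by
  rw [gradient, InnerProductSpace.toDual_symm_apply]

lemma inner_E2 (x y : E2) : ⟪x, y⟫ = x 0 * y 0 + x 1 * y 1 := by
  simp [PiLp.inner_apply, Fin.sum_univ_two]
  ring

lemma perp_key (A : E2 →L[ℝ] E2) (hA : A.det = 1)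
    (w₀ wt : E2) (h : ∀ v : E2, ⟪wt, A v⟫ = ⟪w₀, v⟫) :
    A (perp w₀) = perp wt := by
  set e0 : E2 := EuclideanSpace.single 0 (1:ℝ) with he0
  set e1 : E2 := EuclideanSpace.single 1 (1:ℝ) with he1
  have hdet : A e0 0 * A e1 1 - A e1 0 * A e0 1 = 1 := by
    have h1 : A.det = Matrix.det (LinearMap.toMatrix
        (EuclideanSpace.basisFun (Fin 2) ℝ).toBasis
        (EuclideanSpace.basisFun (Fin 2) ℝ).toBasis (A : E2 →ₗ[ℝ] E2)) :=
      (LinearMap.det_toMatrix _ _).symm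
    rw [h1, Matrix.det_fin_two] at hA
    simpa [LinearMap.toMatrix_apply, he0, he1] using hA
  have hw0 : w₀ 0 = wt 0 * A e0 0 + wt 1 * A e0 1 := by
    have := h e0
    rw [inner_E2, inner_E2] at this
    simp [he0, EuclideanSpace.single_apply] at this
    linarith [this]
  have hw1 : w₀ 1 = wt 0 * A e1 0 + wt 1 * A e1 1 := by
    have := h e1
    rw [inner_E2, inner_E2] at this
    simp [he1, EuclideanSpace.single_apply] at this
    linarith [this]
  have hperp : perp w₀ = (-(w₀ 1)) • e0 + (w₀ 0) • e1 := by
    ext i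
    fin_cases i <;> simp [perp, he0, he1, EuclideanSpace.single_apply]
  rw [hperp]
  have hlin : A ((-(w₀ 1)) • e0 + (w₀ 0) • e1) = (-(w₀ 1)) • A e0 + (w₀ 0) • A e1 := by
    simp
  rw [hlin]
  ext i
  fin_cases i
  · simp only [PiLp.add_apply, PiLp.smul_apply, smul_eq_mul, perp]
    simp [hw0, hw1]
    linear_combination (-(wt 1)) * hdet
  · simp only [PiLp.add_apply, PiLp.smul_apply, smul_eq_mul, perp]
    simp [hw0, hw1]
    linear_combination (wt 0) * hdet

lemma theta_const (u : E2 → ℝ → E2) (θ : E2 → ℝ → ℝ) (X : E2 → ℝ → ℝ → E2)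
    (hθ : ContDiff ℝ 1 (fun p : E2 × ℝ => θ p.1 p.2))
    (htrans : ∀ x : E2, ∀ t : ℝ,
      HasDerivAt (fun s => θ x s) (-(fderiv ℝ (fun y => θ y t) x (u x t))) t)
    (hflow : ∀ α : E2, ∀ τ t : ℝ,
      HasDerivAt (fun s => X α τ s) (u (X α τ t) t) t)
    (hinit : ∀ α : E2, ∀ τ : ℝ, X α τ τ = α) :
    ∀ (α : E2) (t₀ t : ℝ), θ (X α t₀ t) t = θ α t₀ := by
  intro α t₀ t
  have hθd : Differentiable ℝ (fun p : E2 × ℝ => θ p.1 p.2) := hθ.differentiable one_ne_zero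
  set g : ℝ → ℝ := fun s => θ (X α t₀ s) s with hg
  have hgd : ∀ s, HasDerivAt g 0 s := by
    intro s
    have hpair : HasDerivAt (fun s' => (X α t₀ s', s')) ((u (X α t₀ s) s, 1) : E2 × ℝ) s :=
      (hflow α t₀ s).prodMk (hasDerivAt_id s)
    set D := fderiv ℝ (fun p : E2 × ℝ => θ p.1 p.2) (X α t₀ s, s) with hD
    have hθf : HasFDerivAt (fun p : E2 × ℝ => θ p.1 p.2) D (X α t₀ s, s) :=
      (hθd (X α t₀ s, s)).hasFDerivAt
    have hcomp : HasDerivAt g (D (u (X α t₀ s) s, 1)) s := by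
      have := hθf.comp_hasDerivAt_of_eq s hpair rfl
      exact this
    have hsp : ∀ v, fderiv ℝ (fun y => θ y s) (X α t₀ s) v = D (v, 0) := by
      intro v
      have hy : HasFDerivAt (fun y : E2 => (y, s))
          ((ContinuousLinearMap.id ℝ E2).prod 0) (X α t₀ s) :=
        (hasFDerivAt_id (X α t₀ s)).prodMk (hasFDerivAt_const s (X α t₀ s))
      have h2 : HasFDerivAt (fun y => θ y s)
          (D.comp ((ContinuousLinearMap.id ℝ E2).prod 0)) (X α t₀ s) := HasFDerivAt.comp (g := fun p : E2 × ℝ => θ p.1 p.2) (X α t₀ s) hθf hy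
      rw [h2.fderiv]
      rfl
    have htm : D (0, 1) = -(fderiv ℝ (fun y => θ y s) (X α t₀ s) (u (X α t₀ s) s)) := by
      have hy : HasDerivAt (fun s' : ℝ => ((X α t₀ s, s') : E2 × ℝ))
          (((0 : E2), (1:ℝ)) : E2 × ℝ) s :=
        (hasDerivAt_const s (X α t₀ s)).prodMk (hasDerivAt_id s)
      have hc : HasDerivAt (fun s' => θ (X α t₀ s) s') (D (0, 1)) s := by
        have := hθf.comp_hasDerivAt_of_eq s hy rfl
        exact this
      exact hc.unique (htrans (X α t₀ s) s)
    have hzero : D (u (X α t₀ s) s, 1) = 0 := by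
      have hsplit : ((u (X α t₀ s) s, 1) : E2 × ℝ)
          = ((u (X α t₀ s) s, 0) : E2 × ℝ) + ((0, 1) : E2 × ℝ) := by
        simp [Prod.ext_iff]
      rw [hsplit, map_add, ← hsp, htm]
      ring
    rwa [hzero] at hcomp
  have hconst : g t = g t₀ :=
    is_const_of_deriv_eq_zero (fun s => (hgd s).differentiableAt)
      (fun s => (hgd s).deriv) t t₀
  simpa [hg, hinit α t₀] using hconst

/-- Arc-length stretching equals gradient ratio (Lemma 4.2):
for a level-set segment `γ` of `θ(·,t₀)` parametrized by arc length,
`‖∂_β X(γ(β),t₀,t)‖ = ‖∇^⊥θ(X(γ(β),t₀,t),t)‖ / ‖∇^⊥θ(γ(β),t₀)‖`. -/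
theorem arcLength_stretching_eq_gradient_ratio
    (u : E2 → ℝ → E2) (θ : E2 → ℝ → ℝ) (X : E2 → ℝ → ℝ → E2)
    (hu : ContDiff ℝ 1 (fun p : E2 × ℝ => u p.1 p.2))
    (hθ : ContDiff ℝ 1 (fun p : E2 × ℝ => θ p.1 p.2))
    -- θ solves the transport equation ∂ₜθ + u·∇θ = 0
    (htrans : ∀ x : E2, ∀ t : ℝ,
      HasDerivAt (fun s => θ x s) (-(fderiv ℝ (fun y => θ y t) x (u x t))) t)
    -- X is the flow map of u
    (hflow : ∀ α : E2, ∀ τ t : ℝ,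
      HasDerivAt (fun s => X α τ s) (u (X α τ t) t) t)
    (hinit : ∀ α : E2, ∀ τ : ℝ, X α τ τ = α)
    -- X is C¹ in α, with Jacobian of determinant 1 (incompressibility)
    (hXC1 : ∀ τ t : ℝ, ContDiff ℝ 1 (fun α => X α τ t))
    (hdet : ∀ α : E2, ∀ τ t : ℝ, (fderiv ℝ (fun a => X a τ t) α).det = 1)
    -- two fixed times and a level-set segment of θ(·,t₀) parametrized by arc length
    (t₀ t : ℝ) (ht : t₀ ≤ t) (I : Set ℝ) (γ : ℝ → E2)
    (hγ : ∀ β ∈ I, HasDerivAt γ (xi θ t₀ (γ β)) β)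
    (hnz : ∀ β ∈ I, perpGrad θ t₀ (γ β) ≠ 0) :
    ∀ β ∈ I,
      ‖deriv (fun b => X (γ b) t₀ t) β‖ =
        ‖perpGrad θ t (X (γ β) t₀ t)‖ / ‖perpGrad θ t₀ (γ β)‖ := by
  intro β hβ
  have hθd : Differentiable ℝ (fun p : E2 × ℝ => θ p.1 p.2) := hθ.differentiable one_ne_zero
  -- θ(·,s) is differentiable for each fixed s
  have hθs : ∀ (s : ℝ) (y : E2), DifferentiableAt ℝ (fun z => θ z s) y := by
    intro s y
    have hy : HasFDerivAt (fun z : E2 => (z, s))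
        ((ContinuousLinearMap.id ℝ E2).prod 0) y :=
      (hasFDerivAt_id y).prodMk (hasFDerivAt_const s y)
    exact ((hθd (y, s)).hasFDerivAt.comp y hy).differentiableAt
  set x : E2 := γ β with hx
  set A := fderiv ℝ (fun a => X a t₀ t) x with hA
  have hAd : HasFDerivAt (fun a => X a t₀ t) A x :=
    (((hXC1 t₀ t).differentiable one_ne_zero) x).hasFDerivAt
  -- the pullback identity for gradients
  have hconstfun : (fun a : E2 => θ (X a t₀ t) t) = fun a => θ a t₀ :=
    funext fun a => theta_const u θ X hθ htrans hflow hinit a t₀ t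
  have hDtX : HasFDerivAt (fun y => θ y t)
      (fderiv ℝ (fun y => θ y t) (X x t₀ t)) (X x t₀ t) :=
    (hθs t (X x t₀ t)).hasFDerivAt
  have hchain : HasFDerivAt (fun a : E2 => θ (X a t₀ t) t)
      ((fderiv ℝ (fun y => θ y t) (X x t₀ t)).comp A) x := HasFDerivAt.comp (g := fun y => θ y t) x hDtX hAd
  have hfd : fderiv ℝ (fun a => θ a t₀) x
      = (fderiv ℝ (fun y => θ y t) (X x t₀ t)).comp A := by
    rw [← hconstfun] at *
    exact hchain.fderiv
  have hadj : ∀ v : E2, ⟪gradient (fun y => θ y t) (X x t₀ t), A v⟫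
      = ⟪gradient (fun y => θ y t₀) x, v⟫ := by
    intro v
    rw [← fderiv_eq_inner_gradient, ← fderiv_eq_inner_gradient, hfd]
    rfl
  have hperpA : A (perpGrad θ t₀ x) = perpGrad θ t (X x t₀ t) :=
    perp_key A (hdet x t₀ t) _ _ hadj
  -- the derivative of the transported curve
  have hder : HasDerivAt (fun b => X (γ b) t₀ t) (A (xi θ t₀ x)) β :=
    hAd.comp_hasDerivAt β (hγ β hβ)
  rw [hder.deriv]
  have hAxi : A (xi θ t₀ x) = ‖perpGrad θ t₀ x‖⁻¹ • perpGrad θ t (X x t₀ t) := by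
    rw [xi, map_smul, hperpA]
  rw [hAxi, norm_smul]
  have hpos : ‖perpGrad θ t₀ x‖ ≠ 0 := norm_ne_zero_iff.mpr (hnz β hβ)
  rw [norm_inv, norm_norm, div_eq_inv_mul]
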